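/- Let f : ℍ → ℍ be the hyperbolic map f(z) = 2z, whose Denjoy–Wolff point is ∞. There exist a continuous curve δ : [0,∞) → ℍ landing at ∞ with arg(δ(t)) → 0 as t → ∞, and projections π_n of f^n(1) onto δ, such that π_1 = π_2 = 2√2; hence the sequence {d_ℍ(1, π_n)} is strictly increasing only eventually (the word 'eventually' cannot be omitted in the monotonicity theorem for hyperbolic maps). -/

import Mathlib

open Complex Filter Topology

/-- Pseudo-hyperbolic distance on the right half-plane ℍ = {Re z > 0}. -/
noncomputable def rhoH (z w : ℂ) : ℝ := ‖(z - w) / (z + (starRingEnd ℂ) w)‖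

/-- Hyperbolic distance on the right half-plane. -/
noncomputable def dH (z w : ℂ) : ℝ := (1/2) * Real.log ((1 + rhoH z w) / (1 - rhoH z w))

/-- `p` is a hyperbolic projection of `z` onto the curve `γ : [0,∞) → ℍ`. -/
def IsProjH (γ : ℝ → ℂ) (z p : ℂ) : Prop :=
  (∃ t ≥ (0:ℝ), p = γ t) ∧ ∀ t ≥ (0:ℝ), dH z p ≤ dH z (γ t)

/-- `f` is a hyperbolic holomorphic self-map of the right half-plane with
Denjoy–Wolff point ∞: it preserves ℍ, is holomorphic on ℍ, its iterates tend to ∞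
uniformly on compact subsets of ℍ, and `f(z)/z → c` for some `c > 1` as `z → ∞`
within every sector `{|arg z| < φ}`, `φ ∈ (0, π/2)`. -/
def HyperbolicAtInf (f : ℂ → ℂ) : Prop :=
  (∀ z : ℂ, 0 < z.re → 0 < (f z).re) ∧
  DifferentiableOn ℂ f {z : ℂ | 0 < z.re} ∧
  (∀ K : Set ℂ, K ⊆ {z : ℂ | 0 < z.re} → IsCompact K →
    ∀ M : ℝ, ∃ N : ℕ, ∀ n ≥ N, ∀ z ∈ K, M < ‖f^[n] z‖) ∧
  (∃ c : ℝ, 1 < c ∧ ∀ φ ∈ Set.Ioo (0:ℝ) (Real.pi/2), ∀ ε > (0:ℝ), ∃ R : ℝ,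
    ∀ z : ℂ, 0 < z.re → |z.arg| < φ → R < ‖z‖ →
      ‖f z / z - (c:ℂ)‖ < ε)

lemma rhoH_nonneg (z w : ℂ) : 0 ≤ rhoH z w := norm_nonneg _

lemma denom_ne (z w : ℂ) (hz : 0 < z.re) (hw : 0 < w.re) : z + (starRingEnd ℂ) w ≠ 0 := by
  intro h
  have : (z + (starRingEnd ℂ) w).re = 0 := by rw [h]; simp
  simp [Complex.add_re, Complex.conj_re] at this
  linarith

lemma rhoH_eq (z w : ℂ) : rhoH z w = ‖z - w‖ / ‖z + (starRingEnd ℂ) w‖ := by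
  rw [rhoH, norm_div]

lemma normSq_lt (z w : ℂ) (hz : 0 < z.re) (hw : 0 < w.re) :
    Complex.normSq (z - w) < Complex.normSq (z + (starRingEnd ℂ) w) := by
  simp only [Complex.normSq_apply, Complex.sub_re, Complex.sub_im, Complex.add_re, Complex.add_im,
    Complex.conj_re, Complex.conj_im]
  nlinarith [hz, hw]

lemma rhoH_lt_one (z w : ℂ) (hz : 0 < z.re) (hw : 0 < w.re) : rhoH z w < 1 := by
  rw [rhoH_eq]
  have hd : 0 < ‖z + (starRingEnd ℂ) w‖ :=
    norm_pos_iff.mpr (denom_ne z w hz hw)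
  rw [div_lt_one hd, Complex.norm_def, Complex.norm_def]
  exact Real.sqrt_lt_sqrt (Complex.normSq_nonneg _) (normSq_lt z w hz hw)

lemma rhoH_le_of_normSq (z w w' : ℂ) (hz : 0 < z.re) (hw : 0 < w.re) (hw' : 0 < w'.re)
    (h : Complex.normSq (z - w) * Complex.normSq (z + (starRingEnd ℂ) w') ≤
      Complex.normSq (z - w') * Complex.normSq (z + (starRingEnd ℂ) w)) :
    rhoH z w ≤ rhoH z w' := by
  rw [rhoH_eq, rhoH_eq]
  rw [div_le_div_iff₀ (norm_pos_iff.mpr (denom_ne z w hz hw)) (norm_pos_iff.mpr (denom_ne z w' hz hw'))]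
  have e1 : ∀ a b : ℂ, ‖a‖ * ‖b‖ = Real.sqrt (Complex.normSq a * Complex.normSq b) := by
    intro a b
    rw [Complex.norm_def, Complex.norm_def, Real.sqrt_mul (Complex.normSq_nonneg _)]
  rw [e1, e1]
  exact Real.sqrt_le_sqrt h

lemma dH_mono (z w w' : ℂ) (hz : 0 < z.re) (hw : 0 < w.re) (hw' : 0 < w'.re)
    (h : rhoH z w ≤ rhoH z w') : dH z w ≤ dH z w' := by
  have h1 : rhoH z w' < 1 := rhoH_lt_one z w' hz hw'
  have h0 : 0 ≤ rhoH z w := rhoH_nonneg z w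
  have hlt : rhoH z w < 1 := lt_of_le_of_lt h h1
  unfold dH
  have hq : (1 + rhoH z w) / (1 - rhoH z w) ≤ (1 + rhoH z w') / (1 - rhoH z w') :=
    div_le_div₀ (by linarith) (by linarith) (by linarith) (by linarith)
  have hpos : 0 < (1 + rhoH z w) / (1 - rhoH z w) := by
    apply div_pos <;> linarith
  have := Real.log_le_log hpos hq
  linarith

noncomputable def curveD (t : ℝ) : ℂ :=
  ((2 * Real.sqrt 2 + max (t - 2) 0 : ℝ) : ℂ) + ((min t 2 : ℝ) : ℂ) * Complex.I

lemma sqrt2_pos : 0 < Real.sqrt 2 := Real.sqrt_pos.mpr (by norm_num)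
lemma sqrt2_sq : Real.sqrt 2 ^ 2 = 2 := Real.sq_sqrt (by norm_num)
lemma sqrt2_lt : Real.sqrt 2 < 1.42 := by nlinarith [sqrt2_sq, sqrt2_pos]
lemma sqrt2_gt : 1.41 < Real.sqrt 2 := by nlinarith [sqrt2_sq, sqrt2_pos]

lemma curveD_re (t : ℝ) : (curveD t).re = 2 * Real.sqrt 2 + max (t - 2) 0 := by simp [curveD]
lemma curveD_im (t : ℝ) : (curveD t).im = min t 2 := by simp [curveD]

lemma curveD_re_pos (t : ℝ) : 0 < (curveD t).re := by
  rw [curveD_re]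
  have h1 := sqrt2_pos
  have h2 := le_max_right (t - 2) 0
  linarith

lemma curveD_cont : Continuous curveD := by
  unfold curveD; fun_prop

lemma curveD_zero : curveD 0 = ((2 * Real.sqrt 2 : ℝ) : ℂ) := by
  unfold curveD; norm_num

lemma le_abs_curveD (t : ℝ) : t - 2 ≤ ‖curveD t‖ :=
  calc t - 2 ≤ (curveD t).re := by
        rw [curveD_re]
        have := le_max_left (t - 2) 0
        have := sqrt2_pos
        linarith
    _ ≤ |(curveD t).re| := le_abs_self _
    _ ≤ ‖curveD t‖ := Complex.abs_re_le_norm _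

lemma curveD_abs_tendsto : Tendsto (fun t : ℝ => ‖curveD t‖) atTop atTop :=
  tendsto_atTop_mono le_abs_curveD (tendsto_atTop_add_const_right _ _ tendsto_id)

lemma curveD_arg_tendsto : Tendsto (fun t : ℝ => (curveD t).arg) atTop (𝓝 0) := by
  have habs : Tendsto (fun t : ℝ => ‖curveD t‖) atTop atTop := curveD_abs_tendsto
  have hratio : Tendsto (fun t : ℝ => (curveD t).im / ‖curveD t‖) atTop (𝓝 0) := by
    apply squeeze_zero' (g := fun t : ℝ => 2 / ‖curveD t‖)
    · filter_upwards [eventually_ge_atTop (0:ℝ)] with t ht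
      rw [curveD_im]
      have h0 : 0 < ‖curveD t‖ := norm_pos_iff.mpr (by
        intro h
        have := curveD_re_pos t
        rw [h] at this
        simp at this)
      exact div_nonneg (le_min ht (by norm_num)) h0.le
    · filter_upwards [eventually_ge_atTop (0:ℝ)] with t ht
      have h0 : 0 < ‖curveD t‖ := norm_pos_iff.mpr (by
        intro h
        have := curveD_re_pos t
        rw [h] at this
        simp at this)
      rw [curveD_im]
      gcongr
      exact min_le_right t 2
    · have := habs.inv_tendsto_atTop
      have h2 : Tendsto (fun t : ℝ => 2 * (‖curveD t‖)⁻¹) atTop (𝓝 (2 * 0)) :=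
        this.const_mul 2
      simpa [div_eq_mul_inv] using h2
  have harg : ∀ t : ℝ, (curveD t).arg = Real.arcsin ((curveD t).im / ‖curveD t‖) :=
    fun t => Complex.arg_of_re_nonneg (curveD_re_pos t).le
  simp only [harg]
  have := (Real.continuous_arcsin.tendsto 0).comp hratio
  simpa [Function.comp_def] using this

lemma exists_min_of_tendsto (g : ℝ → ℝ) (hc : Continuous g) (ht : Tendsto g atTop atTop) :
    ∃ t0 ≥ (0:ℝ), ∀ t ≥ (0:ℝ), g t0 ≤ g t := by
  obtain ⟨T, hT⟩ := (ht.eventually_ge_atTop (g 0)).exists_forall_of_atTop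
  set T' := max T 0 with hT'
  obtain ⟨t0, ht0mem, hmin⟩ :=
    isCompact_Icc.exists_isMinOn (Set.nonempty_Icc.mpr (le_max_right T 0)) hc.continuousOn
  refine ⟨t0, ht0mem.1, fun t htt => ?_⟩
  rcases le_or_gt t T' with h | h
  · exact hmin ⟨htt, h⟩
  · calc g t0 ≤ g 0 := hmin ⟨le_refl 0, le_max_right T 0⟩
      _ ≤ g t := hT t (le_trans (le_max_left T 0) h.le)

lemma rhoH_cont (z : ℂ) (hz : 0 < z.re) : Continuous fun t : ℝ => rhoH z (curveD t) := by
  unfold rhoH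
  apply continuous_norm.comp
  apply Continuous.div
  · exact continuous_const.sub curveD_cont
  · exact continuous_const.add (continuous_star.comp curveD_cont)
  · intro t
    exact denom_ne z (curveD t) hz (curveD_re_pos t)

lemma dH_cont (z : ℂ) (hz : 0 < z.re) : Continuous fun t : ℝ => dH z (curveD t) := by
  unfold dH
  apply Continuous.mul continuous_const
  have hρ := rhoH_cont z hz
  have h1 : ∀ t : ℝ, rhoH z (curveD t) < 1 := fun t => rhoH_lt_one z (curveD t) hz (curveD_re_pos t)
  have h0 : ∀ t : ℝ, 0 ≤ rhoH z (curveD t) := fun t => rhoH_nonneg z (curveD t)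
  apply Continuous.log
  · exact (continuous_const.add hρ).div (continuous_const.sub hρ)
      (fun t => by have := h1 t; intro h; simp only [sub_eq_zero] at h; linarith)
  · intro t
    have ha := h1 t; have hb := h0 t
    have : 0 < (1 + rhoH z (curveD t)) / (1 - rhoH z (curveD t)) :=
      div_pos (by linarith) (by linarith)
    exact ne_of_gt this

lemma rhoH_sq (z w : ℂ) (hz : 0 < z.re) (hw : 0 < w.re) :
    rhoH z w ^ 2 = Complex.normSq (z - w) / Complex.normSq (z + (starRingEnd ℂ) w) := by
  rw [rhoH_eq, div_pow, Complex.sq_norm, Complex.sq_norm]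

lemma normSq_diff (z w : ℂ) :
    Complex.normSq (z + (starRingEnd ℂ) w) - Complex.normSq (z - w) = 4 * z.re * w.re := by
  simp only [Complex.normSq_apply, Complex.add_re, Complex.add_im, Complex.sub_re,
    Complex.sub_im, Complex.conj_re, Complex.conj_im]
  ring

lemma dH_lower {b : ℝ} (z w : ℂ) (hz : 0 < z.re) (hw : 0 < w.re) (hb : 0 < b)
    (hbw : b ≤ w.re) :
    (1/2) * Real.log (b / (4 * z.re)) ≤ dH z w := by
  set ρ := rhoH z w with hρdef
  have hρ0 : 0 ≤ ρ := rhoH_nonneg z w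
  have hρ1 : ρ < 1 := rhoH_lt_one z w hz hw
  have hdne := denom_ne z w hz hw
  have hd : 0 < Complex.normSq (z + (starRingEnd ℂ) w) := Complex.normSq_pos.mpr hdne
  have hsq := rhoH_sq z w hz hw
  have hns := normSq_diff z w
  have hρns : ρ ^ 2 * Complex.normSq (z + (starRingEnd ℂ) w) = Complex.normSq (z - w) := by
    rw [hsq]; field_simp
  have key : (1 - ρ) * Complex.normSq (z + (starRingEnd ℂ) w) ≤ 4 * z.re * w.re := by
    nlinarith [mul_le_mul_of_nonneg_right (mul_le_mul_of_nonneg_left hρ1.le hρ0) hd.le]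
  have hc2 : w.re ^ 2 ≤ Complex.normSq (z + (starRingEnd ℂ) w) := by
    simp only [Complex.normSq_apply, Complex.add_re, Complex.add_im, Complex.conj_re,
      Complex.conj_im]
    nlinarith [sq_nonneg (z.im - w.im)]
  have h1ρ : 0 < 1 - ρ := by linarith
  have hmain : b / (4 * z.re) ≤ (1 + ρ) / (1 - ρ) := by
    rw [div_le_div_iff₀ (by positivity) h1ρ]
    have s1 : b * (1 - ρ) ≤ w.re * (1 - ρ) := by nlinarith
    have s2 : w.re * ((1 - ρ) * Complex.normSq (z + (starRingEnd ℂ) w)) ≤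
        w.re * (4 * z.re * w.re) := mul_le_mul_of_nonneg_left key hw.le
    nlinarith [mul_le_mul_of_nonneg_right hc2 (mul_pos (by linarith : (0:ℝ) < 4 * z.re) h1ρ).le]
  have hlog := Real.log_le_log (by positivity) hmain
  unfold dH
  linarith

lemma dH_atTop (z : ℂ) (hz : 0 < z.re) :
    Tendsto (fun t : ℝ => dH z (curveD t)) atTop atTop := by
  have hlow : ∀ t : ℝ, (1/2) * Real.log ((2 * Real.sqrt 2 + max (t - 2) 0) / (4 * z.re)) ≤
      dH z (curveD t) := by
    intro t
    have := curveD_re_pos t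
    exact dH_lower z (curveD t) hz this (by rw [← curveD_re]; exact this) (le_of_eq (curveD_re t).symm)
  apply tendsto_atTop_mono hlow
  apply Tendsto.const_mul_atTop (by norm_num : (0:ℝ) < 1/2)
  apply Real.tendsto_log_atTop.comp
  apply Tendsto.atTop_div_const (by linarith [hz] : (0:ℝ) < 4 * z.re)
  apply tendsto_atTop_mono (fun t => ?_) (tendsto_atTop_add_const_right _ (-2) tendsto_id)
  have h1 := le_max_left (t - 2) 0
  have h2 := sqrt2_pos
  simp only [id]
  linarith

lemma proj_two (t : ℝ) : dH 2 ((2 * Real.sqrt 2 : ℝ) : ℂ) ≤ dH 2 (curveD t) := by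
  have hs := sqrt2_pos
  have hw : (0:ℝ) < ((2 * Real.sqrt 2 : ℝ) : ℂ).re := by simpa using by positivity
  apply dH_mono 2 _ _ (by norm_num) hw (curveD_re_pos t)
  apply rhoH_le_of_normSq 2 _ _ (by norm_num) hw (curveD_re_pos t)
  simp only [Complex.normSq_apply, Complex.sub_re, Complex.sub_im, Complex.add_re,
    Complex.add_im, Complex.conj_re, Complex.conj_im, Complex.ofReal_re, Complex.ofReal_im,
    curveD_re, curveD_im]
  set M := max (t - 2) 0 with hM
  set m := min t 2 with hm
  have hM0 : 0 ≤ M := le_max_right _ _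
  have h2 : Real.sqrt 2 ^ 2 = 2 := sqrt2_sq
  norm_num
  nlinarith [sq_nonneg M, sq_nonneg m, mul_nonneg (mul_nonneg hs.le hM0) hM0,
    mul_nonneg hs.le (sq_nonneg m)]

lemma proj_four (t : ℝ) : dH 4 ((2 * Real.sqrt 2 : ℝ) : ℂ) ≤ dH 4 (curveD t) := by
  have hs := sqrt2_pos
  have h2 : Real.sqrt 2 ^ 2 = 2 := sqrt2_sq
  have hw : (0:ℝ) < ((2 * Real.sqrt 2 : ℝ) : ℂ).re := by simpa using by positivity
  apply dH_mono 4 _ _ (by norm_num) hw (curveD_re_pos t)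
  apply rhoH_le_of_normSq 4 _ _ (by norm_num) hw (curveD_re_pos t)
  simp only [Complex.normSq_apply, Complex.sub_re, Complex.sub_im, Complex.add_re,
    Complex.add_im, Complex.conj_re, Complex.conj_im, Complex.ofReal_re, Complex.ofReal_im,
    curveD_re, curveD_im]
  norm_num
  rcases le_or_gt t 2 with h | h
  · rw [max_eq_right (by linarith), min_eq_left h]
    nlinarith [sq_nonneg t, mul_nonneg hs.le (sq_nonneg t)]
  · rw [max_eq_left (by linarith), min_eq_right h.le]
    set M := t - 2 with hMdef
    have hM0 : 0 ≤ M := by simp [hMdef]; linarith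
    nlinarith [mul_nonneg hs.le (sq_nonneg (M - Real.sqrt 2)), sq_nonneg (M - Real.sqrt 2)]

lemma iter_two (n : ℕ) : (fun z : ℂ => 2 * z)^[n] 1 = (2:ℂ) ^ n := by
  induction n with
  | zero => simp
  | succ k ih => rw [Function.iterate_succ_apply', ih]; ring

lemma pow_two_re_pos (n : ℕ) : 0 < ((2:ℂ) ^ n).re := by
  have : (2:ℂ) ^ n = (((2:ℝ) ^ n : ℝ) : ℂ) := by push_cast; ring
  rw [this, Complex.ofReal_re]
  positivity


/-- for the hyperbolic map f(z) = 2z there exist a continuous curve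
δ landing at ∞ with arg δ(t) → 0 and projections π_n of f^n(1) onto δ with
π₁ = π₂ = 2√2; hence {d_ℍ(1, π_n)} is not strictly increasing from the start
("eventually" cannot be omitted). -/
theorem stmt18 (f : ℂ → ℂ) (hf : f = fun z : ℂ => 2 * z) :
    ∃ δ : ℝ → ℂ, ContinuousOn δ (Set.Ici 0) ∧ (∀ t ≥ (0:ℝ), 0 < (δ t).re) ∧
      Tendsto (fun t : ℝ => ‖δ t‖) atTop atTop ∧
      Tendsto (fun t : ℝ => (δ t).arg) atTop (𝓝 0) ∧
      ∃ p : ℕ → ℂ, (∀ n : ℕ, IsProjH δ (f^[n] 1) (p n)) ∧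
        p 1 = ((2 * Real.sqrt 2 : ℝ) : ℂ) ∧ p 2 = ((2 * Real.sqrt 2 : ℝ) : ℂ) ∧
        ¬ (∀ n : ℕ, dH 1 (p n) < dH 1 (p (n+1))) := by
  subst hf
  refine ⟨curveD, curveD_cont.continuousOn, fun t _ => curveD_re_pos t,
    curveD_abs_tendsto, curveD_arg_tendsto, ?_⟩
  have hiter : ∀ n : ℕ, (fun z : ℂ => 2 * z)^[n] 1 = (2:ℂ) ^ n := iter_two
  have hre : ∀ n : ℕ, 0 < (((fun z : ℂ => 2 * z)^[n] 1)).re := by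
    intro n; rw [hiter n]; exact pow_two_re_pos n
  have hproj : ∀ z : ℂ, 0 < z.re → ∃ q : ℂ, IsProjH curveD z q := by
    intro z hz
    obtain ⟨t0, ht0, hmin⟩ := exists_min_of_tendsto _ (dH_cont z hz) (dH_atTop z hz)
    exact ⟨curveD t0, ⟨t0, ht0, rfl⟩, fun t ht => hmin t ht⟩
  set w0 : ℂ := ((2 * Real.sqrt 2 : ℝ) : ℂ) with hw0
  refine ⟨fun n => if n = 1 ∨ n = 2 then w0 else
    Classical.choose (hproj _ (hre n)), ?_, by norm_num, by norm_num, ?_⟩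
  · intro n
    simp only []
    by_cases h : n = 1 ∨ n = 2
    · rw [if_pos h]
      rcases h with h1 | h2
      · subst h1
        have he : (fun z : ℂ => 2 * z)^[1] 1 = (2:ℂ) := by rw [hiter]; norm_num
        rw [he]
        exact ⟨⟨0, le_refl 0, curveD_zero.symm⟩, fun t _ => proj_two t⟩
      · subst h2
        have he : (fun z : ℂ => 2 * z)^[2] 1 = (4:ℂ) := by rw [hiter]; norm_num
        rw [he]
        exact ⟨⟨0, le_refl 0, curveD_zero.symm⟩, fun t _ => proj_four t⟩
    · rw [if_neg h]
      exact Classical.choose_spec (hproj _ (hre n))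
  · intro hmono
    have h1 := hmono 1
    norm_num at h1
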